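/- arXiv:math/0008020 — 5 statements merged into one kernel-verified Lean document; each statement's English description precedes it below -/
import Mathlib

section
/- Let n ≥ 1 and let a, b be partitions of n. Then a^{↓1}, b^{↓1} and (inf_{L_B(n)}(a,b))^{↓1} are partitions of n+1, and in the dominance lattice L_B(n+1) one has inf(a^{↓1}, b^{↓1}) = (inf_{L_B(n)}(a,b))^{↓1}. -/
/-!
Partitions are modelled as functions `s : ℕ → ℕ` (0-based: `s 0` is the first
part `s_1`), nonincreasing and eventually zero.  A paper index `i ≥ 1`
(columns, transitions `→_i`, increments `s^{↓i}`) corresponds to the Lean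
index `i - 1`.
-/

/-- `s` is a partition: nonincreasing and eventually zero. -/
def IsPartition (s : ℕ → ℕ) : Prop :=
  (∀ i, s (i + 1) ≤ s i) ∧ ∃ N, ∀ i, N ≤ i → s i = 0

/-- `j`-th suffix sum (0-based: `suff s 0` is the total sum `|s|`,
`suff s (j-1)` is the paper's `Σ_j`). -/
noncomputable def suff (s : ℕ → ℕ) (j : ℕ) : ℕ := ∑' i, s (j + i)

/-- `s` is a partition of `n`. -/
noncomputable def IsPartOf (n : ℕ) (s : ℕ → ℕ) : Prop := IsPartition s ∧ suff s 0 = n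

/-- Prefix sum of the first `j` parts. -/
def psum (s : ℕ → ℕ) (j : ℕ) : ℕ := ∑ i ∈ Finset.range j, s i

/-- Dominance ordering: `Dom s t` means `s ≥ t`, i.e. every prefix sum of `s`
is at least the corresponding prefix sum of `t`. -/
def Dom (s t : ℕ → ℕ) : Prop := ∀ j, psum t j ≤ psum s j

/-- `s^{↓(i+1)}`: add one grain on the (0-based) `i`-th column. -/
def incr (s : ℕ → ℕ) (i : ℕ) : ℕ → ℕ := Function.update s i (s i + 1)

/-- Move one grain from column `a` to column `b` (0-based). -/
def moveGrain (s : ℕ → ℕ) (a b : ℕ) : ℕ → ℕ :=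
  fun j => if j = a then s a - 1 else if j = b then s b + 1 else s j

/-- `s` has a cliff at (0-based) column `i`: `s_i ≥ s_{i+1} + 2`. -/
def Cliff (s : ℕ → ℕ) (i : ℕ) : Prop := s (i + 1) + 2 ≤ s i

/-- `s` has a slippery step at (0-based) column `i`, the plateau ending at
(0-based) column `m`:  `s_i - 1 = s_{i+1} = ⋯ = s_m = s_{m+1} + 1` (in 0-based
indices), with `m ≥ i + 1`. -/
def SlipAt (s : ℕ → ℕ) (i m : ℕ) : Prop :=
  i + 1 ≤ m ∧ (∀ j, i + 1 ≤ j → j ≤ m → s j + 1 = s i) ∧ s (m + 1) + 2 = s i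

/-- The transition `s →_{i+1} t` of the paper (0-based `i`): a fall from a
cliff at `i`, or a slip from a slippery step at `i` (the grain landing just
after the plateau). -/
def Step (s : ℕ → ℕ) (i : ℕ) (t : ℕ → ℕ) : Prop :=
  (Cliff s i ∧ t = moveGrain s i (i + 1)) ∨
  (∃ m, SlipAt s i m ∧ t = moveGrain s i (m + 1))

/-- The set of configurations directly reachable from `s`. -/
def dirreach (s : ℕ → ℕ) : Set (ℕ → ℕ) := {t | ∃ i, Step s i t}

/-- `s` has a (slippery, if `l ≥ 2`) plateau of length `l` at `1`:
`s_1 = s_2 = ⋯ = s_l = s_{l+1} + 1`. -/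
def SlipperyPlateau1 (s : ℕ → ℕ) (l : ℕ) : Prop :=
  (∀ j, j < l → s j = s 0) ∧ s l + 1 = s 0

/-- `s` has a non-slippery plateau at `1`:
`s_1 = ⋯ = s_l ≥ s_{l+1} + 2` for some `l ≥ 2`. -/
def NonSlipperyPlateau1 (s : ℕ → ℕ) : Prop :=
  ∃ l, 2 ≤ l ∧ (∀ j, j < l → s j = s 0) ∧ s l + 2 ≤ s 0

/-- `s` has a slippery step at `1`. -/
def SlipperyStep1 (s : ℕ → ℕ) : Prop := ∃ m, SlipAt s 0 m

/-- `s` has a non-slippery step at `1`: `s_1 = s_2 + 1` and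
`s_2 = ⋯ = s_m ≥ s_{m+1} + 2` for some `m ≥ 2` (here `m` is 0-based, `≥ 1`). -/
def NonSlipperyStep1 (s : ℕ → ℕ) : Prop :=
  s 0 = s 1 + 1 ∧ ∃ m, 1 ≤ m ∧ (∀ j, 1 ≤ j → j ≤ m → s j = s 1) ∧ s (m + 1) + 2 ≤ s 1

/-- `c` is the infimum of `a` and `b` in the dominance lattice `L_B(n)`. -/
noncomputable def IsInfOn (n : ℕ) (a b c : ℕ → ℕ) : Prop :=
  IsPartOf n c ∧ Dom a c ∧ Dom b c ∧ ∀ d, IsPartOf n d → Dom a d → Dom b d → Dom c d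

/-- `c` is the supremum of `a` and `b` in the dominance lattice `L_B(n)`. -/
noncomputable def IsSupOn (n : ℕ) (a b c : ℕ → ℕ) : Prop :=
  IsPartOf n c ∧ Dom c a ∧ Dom c b ∧ ∀ d, IsPartOf n d → Dom d a → Dom d b → Dom d c

/-- The order `≥_∞` on the set `P` of all partitions: `GeInf s t` means
`s ≥_∞ t`, i.e. every suffix sum of `s` is at most that of `t`. -/
noncomputable def GeInf (s t : ℕ → ℕ) : Prop := ∀ j, suff s j ≤ suff t j

/-- `c` is the infimum of `a` and `b` in `(P, ≥_∞)`. -/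
noncomputable def IsInfP (a b c : ℕ → ℕ) : Prop :=
  IsPartition c ∧ GeInf a c ∧ GeInf b c ∧
    ∀ d, IsPartition d → GeInf a d → GeInf b d → GeInf c d

/-- `c` is the supremum of `a` and `b` in `(P, ≥_∞)`. -/
noncomputable def IsSupP (a b c : ℕ → ℕ) : Prop :=
  IsPartition c ∧ GeInf c a ∧ GeInf c b ∧
    ∀ d, IsPartition d → GeInf d a → GeInf d b → GeInf d c

/-- The map `π`: delete the first part, `(s_1, s_2, …) ↦ (s_2, …)`. -/
def shift (s : ℕ → ℕ) : ℕ → ℕ := fun i => s (i + 1)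

section Aux

lemma psum_succ (s : ℕ → ℕ) (j : ℕ) : psum s (j + 1) = psum s j + s j :=
  Finset.sum_range_succ s j

lemma psum_mono (s : ℕ → ℕ) {j k : ℕ} (h : j ≤ k) : psum s j ≤ psum s k :=
  Finset.sum_le_sum_of_subset (Finset.range_subset_range.2 h)

lemma psum_stable (s : ℕ → ℕ) {N k : ℕ} (h : ∀ i, N ≤ i → s i = 0) (hk : N ≤ k) :
    psum s k = psum s N := by
  unfold psum
  rw [← Finset.sum_subset (Finset.range_subset_range.2 hk)]
  intro i hi hni
  simp only [Finset.mem_range] at hi hni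
  exact h i (by omega)

lemma suff_zero_eq_psum (s : ℕ → ℕ) (N : ℕ) (h : ∀ i, N ≤ i → s i = 0) :
    suff s 0 = psum s N := by
  unfold suff psum
  simp only [zero_add]
  refine tsum_eq_sum (L := SummationFilter.unconditional ℕ) (fun i hi => h i ?_)
  simp only [Finset.mem_range, not_lt] at hi
  exact hi

lemma psum_le_of_partof {n : ℕ} {s : ℕ → ℕ} (hs : IsPartOf n s) (j : ℕ) :
    psum s j ≤ n := by
  obtain ⟨⟨_, N, hN⟩, hsum⟩ := hs
  have h1 : suff s 0 = psum s N := suff_zero_eq_psum s N hN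
  have h2 : psum s j ≤ psum s (max j N) := psum_mono s (le_max_left _ _)
  have h3 : psum s (max j N) = psum s N := psum_stable s hN (le_max_right _ _)
  omega

lemma psum_eventually_eq {n : ℕ} {s : ℕ → ℕ} (hs : IsPartOf n s) :
    ∃ N, ∀ k, N ≤ k → psum s k = n := by
  obtain ⟨⟨_, N, hN⟩, hsum⟩ := hs
  refine ⟨N, fun k hk => ?_⟩
  rw [psum_stable s hN hk, ← suff_zero_eq_psum s N hN, hsum]

lemma psum_incr_zero (s : ℕ → ℕ) (j : ℕ) (hj : 1 ≤ j) :
    psum (incr s 0) j = psum s j + 1 := by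
  unfold psum incr
  induction j with
  | zero => omega
  | succ k ih =>
    rcases Nat.eq_zero_or_pos k with rfl | hk
    · simp [Function.update]
    · rw [Finset.sum_range_succ, Finset.sum_range_succ s, ih hk,
        Function.update_of_ne (by omega)]
      ring

lemma isPartOf_incr {n : ℕ} {s : ℕ → ℕ} (hs : IsPartOf n s) :
    IsPartOf (n + 1) (incr s 0) := by
  obtain ⟨⟨hmono, N, hN⟩, hsum⟩ := hs
  refine ⟨⟨fun i => ?_, ⟨N + 1, fun i hi => ?_⟩⟩, ?_⟩
  · unfold incr
    rcases Nat.eq_zero_or_pos i with rfl | hi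
    · rw [Function.update_of_ne (by omega), Function.update_self]
      exact le_trans (hmono 0) (by omega)
    · rw [Function.update_of_ne (by omega), Function.update_of_ne (by omega)]
      exact hmono i
  · unfold incr
    rw [Function.update_of_ne (by omega)]
    exact hN i (by omega)
  · have hN' : ∀ i, N + 1 ≤ i → incr s 0 i = 0 := by
      intro i hi
      unfold incr
      rw [Function.update_of_ne (by omega)]
      exact hN i (by omega)
    rw [suff_zero_eq_psum _ (N + 1) hN', psum_incr_zero s (N + 1) (by omega)]
    have h1 := psum_stable s hN (show N ≤ N + 1 by omega)
    have h2 := suff_zero_eq_psum s N hN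
    omega

/-- The canonical infimum: parts are differences of min-of-prefix-sums. -/
noncomputable def infPart (a b : ℕ → ℕ) : ℕ → ℕ :=
  fun j => min (psum a (j + 1)) (psum b (j + 1)) - min (psum a j) (psum b j)

lemma minpsum_mono (a b : ℕ → ℕ) (j : ℕ) :
    min (psum a j) (psum b j) ≤ min (psum a (j + 1)) (psum b (j + 1)) :=
  le_min (le_trans (min_le_left _ _) (psum_mono a (by omega)))
         (le_trans (min_le_right _ _) (psum_mono b (by omega)))

lemma psum_infPart (a b : ℕ → ℕ) (j : ℕ) :
    psum (infPart a b) j = min (psum a j) (psum b j) := by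
  induction j with
  | zero => simp [psum]
  | succ k ih =>
    rw [psum_succ, ih]
    unfold infPart
    have := minpsum_mono a b k
    omega

lemma minpsum_concave {a b : ℕ → ℕ} (hamono : ∀ i, a (i + 1) ≤ a i)
    (hbmono : ∀ i, b (i + 1) ≤ b i) (i : ℕ) :
    min (psum a (i + 2)) (psum b (i + 2)) + min (psum a i) (psum b i)
      ≤ 2 * min (psum a (i + 1)) (psum b (i + 1)) := by
  have ha2 : psum a (i + 2) = psum a (i + 1) + a (i + 1) := psum_succ a (i + 1)
  have ha1 : psum a (i + 1) = psum a i + a i := psum_succ a i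
  have hb2 : psum b (i + 2) = psum b (i + 1) + b (i + 1) := psum_succ b (i + 1)
  have hb1 : psum b (i + 1) = psum b i + b i := psum_succ b i
  have e1 : psum a (i + 1 + 1) = psum a (i + 2) := rfl
  have e2 : psum b (i + 1 + 1) = psum b (i + 2) := rfl
  have hda := hamono i
  have hdb := hbmono i
  have h1 := min_le_left (psum a (i + 2)) (psum b (i + 2))
  have h2 := min_le_right (psum a (i + 2)) (psum b (i + 2))
  have h3 := min_le_left (psum a i) (psum b i)
  have h4 := min_le_right (psum a i) (psum b i)
  have h5 : min (psum a (i+1)) (psum b (i+1)) = psum a (i+1) ∨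
      min (psum a (i+1)) (psum b (i+1)) = psum b (i+1) := min_choice _ _
  omega

lemma infPart_isPartOf {n : ℕ} {a b : ℕ → ℕ} (ha : IsPartOf n a) (hb : IsPartOf n b) :
    IsPartOf n (infPart a b) := by
  obtain ⟨Na, hNa⟩ := psum_eventually_eq ha
  obtain ⟨Nb, hNb⟩ := psum_eventually_eq hb
  have hev : ∀ i, max Na Nb ≤ i → infPart a b i = 0 := by
    intro i hi
    unfold infPart
    rw [hNa _ (by omega), hNa _ (by omega), hNb _ (by omega), hNb _ (by omega)]
    simp
  refine ⟨⟨fun i => ?_, ⟨max Na Nb, hev⟩⟩, ?_⟩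
  · have hc := minpsum_concave ha.1.1 hb.1.1 i
    have hm1 := minpsum_mono a b i
    have hm2 := minpsum_mono a b (i + 1)
    unfold infPart
    have e1 : psum a (i + 1 + 1) = psum a (i + 2) := rfl
    have e2 : psum b (i + 1 + 1) = psum b (i + 2) := rfl
    have f1 := min_le_left (psum a (i + 1 + 1)) (psum b (i + 1 + 1))
    omega
  · rw [suff_zero_eq_psum _ (max Na Nb) hev, psum_infPart,
      hNa _ (le_max_left _ _), hNb _ (le_max_right _ _)]
    simp

end Aux

/-- For `n ≥ 1` and `a, b` partitions of `n`, `a^{↓1}`,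
`b^{↓1}` and `(inf_{L_B(n)}(a,b))^{↓1}` are partitions of `n+1`, and
`inf_{L_B(n+1)}(a^{↓1}, b^{↓1}) = (inf_{L_B(n)}(a,b))^{↓1}`. -/
theorem stmt0 (n : ℕ) (hn : 1 ≤ n) (a b c : ℕ → ℕ)
    (ha : IsPartOf n a) (hb : IsPartOf n b) (hc : IsInfOn n a b c) :
    IsPartOf (n + 1) (incr a 0) ∧ IsPartOf (n + 1) (incr b 0) ∧
      IsPartOf (n + 1) (incr c 0) ∧
      IsInfOn (n + 1) (incr a 0) (incr b 0) (incr c 0) := by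
  have hcmin : ∀ j, psum c j = min (psum a j) (psum b j) := by
    intro j
    have hm := infPart_isPartOf ha hb
    have hma : Dom a (infPart a b) := by
      intro k; rw [psum_infPart]; exact min_le_left _ _
    have hmb : Dom b (infPart a b) := by
      intro k; rw [psum_infPart]; exact min_le_right _ _
    have h1 : psum (infPart a b) j ≤ psum c j := hc.2.2.2 _ hm hma hmb j
    have h2 : psum c j ≤ psum a j := hc.2.1 j
    have h3 : psum c j ≤ psum b j := hc.2.2.1 j
    rw [psum_infPart] at h1
    omega
  have hdomac : Dom (incr a 0) (incr c 0) := by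
    intro j
    rcases Nat.eq_zero_or_pos j with rfl | hj
    · simp [psum]
    · rw [psum_incr_zero a j hj, psum_incr_zero c j hj]
      have := hc.2.1 j
      omega
  have hdombc : Dom (incr b 0) (incr c 0) := by
    intro j
    rcases Nat.eq_zero_or_pos j with rfl | hj
    · simp [psum]
    · rw [psum_incr_zero b j hj, psum_incr_zero c j hj]
      have := hc.2.2.1 j
      omega
  refine ⟨isPartOf_incr ha, isPartOf_incr hb, isPartOf_incr hc.1,
    isPartOf_incr hc.1, hdomac, hdombc, ?_⟩
  intro d hd hda hdb j
  rcases Nat.eq_zero_or_pos j with rfl | hj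
  · simp [psum]
  · have h1 := hda j
    have h2 := hdb j
    rw [psum_incr_zero a j hj] at h1
    rw [psum_incr_zero b j hj] at h2
    rw [psum_incr_zero c j hj, hcmin j]
    omega
end

section
/- Let s be a partition having a slippery plateau of length l at 1 (l ≥ 2). Then s^{↓1} →_1 s^{↓(l+1)}, and dirreach(s^{↓1}) = dirreach(s)^{↓1} ∪ {s^{↓(l+1)}}. -/
lemma incr0_zero (s : ℕ → ℕ) : incr s 0 0 = s 0 + 1 := by simp [incr]

lemma incr0_ne (s : ℕ → ℕ) {j : ℕ} (hj : j ≠ 0) : incr s 0 j = s j := by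
  simp [incr, Function.update_of_ne hj]

lemma moveGrain_incr0 (s : ℕ → ℕ) {a b : ℕ} (ha : a ≠ 0) (hb : b ≠ 0) :
    moveGrain (incr s 0) a b = incr (moveGrain s a b) 0 := by
  funext j
  rcases eq_or_ne j 0 with rfl | hj
  · simp [moveGrain, incr, Ne.symm ha, Ne.symm hb,
      Function.update_of_ne, Function.update_self]
  · rw [incr0_ne _ hj]
    simp only [moveGrain, incr0_ne s ha, incr0_ne s hb, incr0_ne s hj]

lemma cliff_incr0_iff (s : ℕ → ℕ) (i : ℕ) :
    Cliff (incr s 0) (i + 1) ↔ Cliff s (i + 1) := by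
  unfold Cliff
  rw [incr0_ne s (by omega : i + 1 + 1 ≠ 0), incr0_ne s (by omega : i + 1 ≠ 0)]

lemma slipAt_incr0_iff (s : ℕ → ℕ) (i m : ℕ) :
    SlipAt (incr s 0) (i + 1) m ↔ SlipAt s (i + 1) m := by
  unfold SlipAt
  constructor
  · rintro ⟨h1, h2, h3⟩
    refine ⟨h1, fun j hj1 hj2 => ?_, ?_⟩
    · have := h2 j hj1 hj2
      rwa [incr0_ne s (by omega : j ≠ 0), incr0_ne s (by omega : i + 1 ≠ 0)] at this
    · rwa [incr0_ne s (by omega : m + 1 ≠ 0), incr0_ne s (by omega : i + 1 ≠ 0)] at h3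
  · rintro ⟨h1, h2, h3⟩
    refine ⟨h1, fun j hj1 hj2 => ?_, ?_⟩
    · rw [incr0_ne s (by omega : j ≠ 0), incr0_ne s (by omega : i + 1 ≠ 0)]
      exact h2 j hj1 hj2
    · rw [incr0_ne s (by omega : m + 1 ≠ 0), incr0_ne s (by omega : i + 1 ≠ 0)]
      exact h3

lemma step_pos_iff (s : ℕ → ℕ) (i : ℕ) (t : ℕ → ℕ) :
    Step (incr s 0) (i + 1) t ↔ ∃ u, Step s (i + 1) u ∧ t = incr u 0 := by
  constructor
  · rintro (⟨hc, rfl⟩ | ⟨m, hm, rfl⟩)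
    · exact ⟨moveGrain s (i + 1) (i + 1 + 1),
        Or.inl ⟨(cliff_incr0_iff s i).1 hc, rfl⟩,
        moveGrain_incr0 s (by omega) (by omega)⟩
    · have hm' := (slipAt_incr0_iff s i m).1 hm
      exact ⟨moveGrain s (i + 1) (m + 1), Or.inr ⟨m, hm', rfl⟩,
        moveGrain_incr0 s (by omega) (by omega)⟩
  · rintro ⟨u, (⟨hc, rfl⟩ | ⟨m, hm, rfl⟩), rfl⟩
    · exact Or.inl ⟨(cliff_incr0_iff s i).2 hc,
        (moveGrain_incr0 s (show i + 1 ≠ 0 by omega) (show i + 1 + 1 ≠ 0 by omega)).symm⟩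
    · exact Or.inr ⟨m, (slipAt_incr0_iff s i m).2 hm,
        (moveGrain_incr0 s (show i + 1 ≠ 0 by omega) (show m + 1 ≠ 0 by omega)).symm⟩

/-- If `s` has a slippery plateau of length `l ≥ 2` at `1`,
then `s^{↓1} →_1 s^{↓(l+1)}` and
`dirreach(s^{↓1}) = dirreach(s)^{↓1} ∪ {s^{↓(l+1)}}`. -/
theorem stmt4 (s : ℕ → ℕ) (l : ℕ) (hs : IsPartition s) (hl : 2 ≤ l)
    (hp : SlipperyPlateau1 s l) :
    Step (incr s 0) 0 (incr s l) ∧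
    dirreach (incr s 0) = (fun t => incr t 0) '' dirreach s ∪ {incr s l} := by
  obtain ⟨hpl, hsl⟩ := hp
  have h1 : s 1 = s 0 := hpl 1 (by omega)
  -- s has no step at 0
  have no0 : ∀ t, ¬ Step s 0 t := by
    rintro t (⟨hc, -⟩ | ⟨m, ⟨hm1, hm2, hm3⟩, -⟩)
    · unfold Cliff at hc
      have e1 : s (0 + 1) = s 1 := rfl
      omega
    · have := hm2 1 le_rfl hm1; omega
  -- the unique slip of incr s 0 at 0
  have hslip : SlipAt (incr s 0) 0 (l - 1) := by
    refine ⟨by omega, fun j hj1 hj2 => ?_, ?_⟩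
    · rw [incr0_ne s (by omega : j ≠ 0), incr0_zero, hpl j (by omega)]
    · rw [incr0_ne s (by omega : l - 1 + 1 ≠ 0), incr0_zero]
      have : l - 1 + 1 = l := by omega
      rw [this]; omega
  have hmove : moveGrain (incr s 0) 0 (l - 1 + 1) = incr s l := by
    have hll : l - 1 + 1 = l := by omega
    rw [hll]
    funext j
    rcases eq_or_ne j 0 with rfl | hj
    · simp only [moveGrain, if_pos rfl, incr0_zero]
      rw [incr0_ne s (by omega : l ≠ 0)]
      simp [incr, Function.update_of_ne (by omega : (0:ℕ) ≠ l)]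
    · rcases eq_or_ne j l with rfl | hjl
      · simp only [moveGrain, if_neg hj, if_pos rfl]
        rw [incr0_ne s hj]
        simp [incr]
      · simp only [moveGrain, if_neg hj, if_neg hjl]
        rw [incr0_ne s hj]
        simp [incr, Function.update_of_ne hjl]
  have hstep0 : Step (incr s 0) 0 (incr s l) :=
    Or.inr ⟨l - 1, hslip, hmove.symm⟩
  refine ⟨hstep0, ?_⟩
  -- characterize steps of incr s 0 at 0
  have step0_iff : ∀ t, Step (incr s 0) 0 t → t = incr s l := by
    rintro t (⟨hc, -⟩ | ⟨m, ⟨hm1, hm2, hm3⟩, rfl⟩)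
    · unfold Cliff at hc
      rw [incr0_ne s (by omega : (0:ℕ)+1 ≠ 0), incr0_zero] at hc
      have e1 : s (0 + 1) = s 1 := rfl
      omega
    · -- show m = l - 1
      rw [incr0_zero] at hm3
      rw [incr0_ne s (by omega : m + 1 ≠ 0)] at hm3
      have hmlt : m < l := by
        by_contra h
        push_neg at h
        have := hm2 l (by omega) h
        rw [incr0_ne s (by omega : l ≠ 0), incr0_zero] at this; omega
      have hmge : l ≤ m + 1 := by
        by_contra h
        push_neg at h
        have := hpl (m + 1) (by omega); omega
      have : m = l - 1 := by omega
      rw [this, hmove]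
  ext t
  constructor
  · rintro ⟨i, hi⟩
    rcases i with _ | i
    · exact Or.inr (step0_iff t hi)
    · obtain ⟨u, hu, rfl⟩ := (step_pos_iff s i t).1 hi
      exact Or.inl ⟨u, ⟨i + 1, hu⟩, rfl⟩
  · rintro (⟨u, ⟨i, hi⟩, rfl⟩ | ht)
    · rcases i with _ | i
      · exact absurd hi (no0 u)
      · exact ⟨i + 1, (step_pos_iff s i (incr u 0)).2 ⟨u, hi, rfl⟩⟩
    · rw [Set.mem_singleton_iff] at ht
      exact ⟨0, ht ▸ hstep0⟩
end

section
/- Let n ≥ 1. Let S (resp. T) be the set of partitions of n with a slippery (resp. non-slippery) step at 1, and for l ≥ 1 let U_l be the set of partitions s of n with s_1 = s_2 = ⋯ = s_l = s_{l+1} + 1. Then every partition of n+1 belongs to L_B(n)^{↓1} ∪ S^{↓2} ∪ T^{↓2} ∪ ⋃_{l≥1} (U_l)^{↓(l+1)}. -/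
lemma suff_eq_sum' (s : ℕ → ℕ) (N : ℕ) (h : ∀ i, N ≤ i → s i = 0) :
    suff s 0 = ∑ i ∈ Finset.range N, s i := by
  unfold suff
  have : (fun i => s (0 + i)) = s := funext fun i => by simp
  rw [this]
  exact tsum_eq_sum (fun b hb => h b (by simpa using hb))

lemma decr_part (u : ℕ → ℕ) (n i : ℕ) (hu : IsPartOf (n + 1) u)
    (h2 : u (i + 1) + 1 ≤ u i) :
    IsPartOf n (Function.update u i (u i - 1)) ∧
      u = incr (Function.update u i (u i - 1)) i := by
  obtain ⟨⟨hmono, N, hN⟩, hsum⟩ := hu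
  have h1 : 1 ≤ u i := le_trans (Nat.le_add_left 1 _) h2
  set s := Function.update u i (u i - 1) with hs
  have hsval : ∀ j, s j = if j = i then u i - 1 else u j := by
    intro j; simp [hs, Function.update]
  constructor
  · refine ⟨⟨?_, ⟨N + i + 1, ?_⟩⟩, ?_⟩
    · intro j
      rcases eq_or_ne j i with rfl | hji
      · rw [hsval, hsval, if_neg (show ¬ j + 1 = j by omega), if_pos rfl]
        omega
      · rcases eq_or_ne (j + 1) i with hj1 | hj1
        · subst hj1
          rw [hsval, hsval, if_pos rfl, if_neg hji]
          have := hmono j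
          omega
        · rw [hsval, hsval, if_neg hj1, if_neg hji]
          exact hmono j
    · intro j hj
      rw [hsval, if_neg (by omega)]
      exact hN j (by omega)
    · -- sum
      set M := max N (i + 1) with hM
      have hiM : i ∈ Finset.range M := Finset.mem_range.2 (by omega)
      have hzs : ∀ j, M ≤ j → s j = 0 := by
        intro j hj
        rw [hsval, if_neg (by omega)]
        exact hN j (by omega)
      have hzu : ∀ j, M ≤ j → u j = 0 := fun j hj => hN j (by omega)
      have hus : suff u 0 = ∑ j ∈ Finset.range M, u j := suff_eq_sum' u M hzu
      have hss : suff s 0 = ∑ j ∈ Finset.range M, s j := suff_eq_sum' s M hzs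
      have hu' : ∑ j ∈ Finset.range M, u j
          = u i + ∑ j ∈ (Finset.range M).erase i, u j :=
        (Finset.add_sum_erase _ u hiM).symm
      have hs' : ∑ j ∈ Finset.range M, s j
          = s i + ∑ j ∈ (Finset.range M).erase i, s j :=
        (Finset.add_sum_erase _ s (by simpa using hiM)).symm
      have hsi : s i = u i - 1 := by rw [hsval]; simp
      have heq : ∑ j ∈ (Finset.range M).erase i, s j
          = ∑ j ∈ (Finset.range M).erase i, u j := by
        refine Finset.sum_congr rfl fun j hj => ?_
        rw [hsval, if_neg (Finset.ne_of_mem_erase hj)]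
      rw [hss, hs', heq]
      rw [hus, hu'] at hsum
      omega
  · -- u = incr s i
    funext j
    rcases eq_or_ne j i with rfl | hji
    · simp [incr, hsval, Function.update]
      omega
    · simp [incr, Function.update, hji, hs]

/-- For `n ≥ 1`, every partition of `n+1` lies in
`L_B(n)^{↓1} ∪ S^{↓2} ∪ T^{↓2} ∪ ⋃_{l ≥ 1} (U_l)^{↓(l+1)}`, where `S` (resp.
`T`) is the set of partitions of `n` with a slippery (resp. non-slippery) step
at `1`, and `U_l` is the set of partitions of `n` with
`s_1 = ⋯ = s_l = s_{l+1} + 1`. -/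
theorem stmt6 (n : ℕ) (hn : 1 ≤ n) (u : ℕ → ℕ) (hu : IsPartOf (n + 1) u) :
    (∃ s, IsPartOf n s ∧ u = incr s 0) ∨
    (∃ s, IsPartOf n s ∧ SlipperyStep1 s ∧ u = incr s 1) ∨
    (∃ s, IsPartOf n s ∧ NonSlipperyStep1 s ∧ u = incr s 1) ∨
    (∃ l s, 1 ≤ l ∧ IsPartOf n s ∧ SlipperyPlateau1 s l ∧ u = incr s l) := by
  obtain ⟨⟨hmono, N, hN⟩, hsum⟩ := hu
  have hanti : ∀ j k, j ≤ k → u k ≤ u j := fun j k h =>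
    (antitone_nat_of_succ_le hmono) h
  have hu0 : 1 ≤ u 0 := by
    by_contra h
    have h0 : ∀ j, u j = 0 := fun j => by have := hanti 0 j (Nat.zero_le _); omega
    have : suff u 0 = ∑ i ∈ Finset.range 0, u i := suff_eq_sum' u 0 fun i _ => h0 i
    simp at this
    omega
  rcases lt_or_eq_of_le (hmono 0) with hlt | heq
  · -- u 1 < u 0 : first disjunct
    left
    obtain ⟨hpart, hincr⟩ := decr_part u n 0 ⟨⟨hmono, N, hN⟩, hsum⟩ (by omega)
    exact ⟨_, hpart, hincr⟩
  · -- u 0 = u 1 : plateau case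
    right; right; right
    have hex : ∃ k, u k ≠ u 0 := ⟨N, by have := hN N le_rfl; omega⟩
    obtain ⟨k, hkspec, hklt⟩ : ∃ k, u k ≠ u 0 ∧ ∀ j, j < k → u j = u 0 :=
      ⟨Nat.find hex, Nat.find_spec hex, fun j hj => by
        by_contra h; exact absurd (Nat.find_min hex hj) (by simp [h])⟩
    have hk2 : 2 ≤ k := by
      rcases Nat.lt_or_ge k 2 with h | h
      · interval_cases k
        · exact absurd rfl hkspec
        · exact (hkspec heq).elim
      · exact h
    obtain ⟨l, hl⟩ : ∃ l, l = k - 1 := ⟨_, rfl⟩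
    have hl1 : 1 ≤ l := by omega
    have hul : u l = u 0 := hklt l (by omega)
    have hul1 : u (l + 1) < u 0 := by
      have h1 : u (l + 1) ≤ u 0 := hanti 0 (l + 1) (Nat.zero_le _)
      have : l + 1 = k := by omega
      rw [this] at h1 ⊢
      exact lt_of_le_of_ne h1 hkspec
    obtain ⟨hpart, hincr⟩ := decr_part u n l ⟨⟨hmono, N, hN⟩, hsum⟩ (by omega)
    refine ⟨l, _, hl1, hpart, ⟨?_, ?_⟩, hincr⟩
    · intro j hj
      have h0 : Function.update u l (u l - 1) 0 = u 0 :=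
        Function.update_of_ne (by omega) _ _
      have hjv : Function.update u l (u l - 1) j = u j :=
        Function.update_of_ne (by omega) _ _
      rw [h0, hjv, hklt j (by omega)]
    · have h0 : Function.update u l (u l - 1) 0 = u 0 :=
        Function.update_of_ne (by omega) _ _
      rw [h0, Function.update_self, hul]
      omega
end

section
/- Let s be a partition having a non-slippery step at 1. Then dirreach(s^{↓2}) = dirreach(s)^{↓2}. -/
lemma incr_one_apply (s : ℕ → ℕ) (j : ℕ) :
    incr s 1 j = if j = 1 then s 1 + 1 else s j := by
  simp [incr, Function.update_apply]

lemma incr_moveGrain_comm (s : ℕ → ℕ) {a b : ℕ} (ha : a ≠ 1) (hb : b ≠ 1) :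
    incr (moveGrain s a b) 1 = moveGrain (incr s 1) a b := by
  funext j
  simp only [incr, moveGrain, Function.update_apply]
  split_ifs <;> omega

lemma incr_moveGrain_comm' (s : ℕ → ℕ) (h1 : 1 ≤ s 1) :
    incr (moveGrain s 1 2) 1 = moveGrain (incr s 1) 1 2 := by
  funext j
  simp only [incr, moveGrain, Function.update_apply]
  split_ifs <;> omega

lemma slipAt_incr_iff {s : ℕ → ℕ} {i m' : ℕ} (hi : 2 ≤ i) :
    SlipAt (incr s 1) i m' ↔ SlipAt s i m' := by
  unfold SlipAt
  have e : ∀ j, 2 ≤ j → incr s 1 j = s j := by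
    intro j hj; rw [incr_one_apply]; simp [show j ≠ 1 by omega]
  constructor <;> rintro ⟨h1, h2, h3⟩ <;> refine ⟨h1, fun j hj1 hj2 => ?_, ?_⟩
  · have := h2 j hj1 hj2
    rwa [e j (by omega), e i hi] at this
  · rwa [e (m' + 1) (by omega), e i hi] at h3
  · have := h2 j hj1 hj2
    rwa [e j (by omega), e i hi]
  · rwa [e (m' + 1) (by omega), e i hi]

lemma cliff_incr_iff {s : ℕ → ℕ} {i : ℕ} (hi : 2 ≤ i) :
    Cliff (incr s 1) i ↔ Cliff s i := by
  unfold Cliff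
  rw [incr_one_apply, incr_one_apply]
  simp [show i ≠ 1 by omega, show i + 1 ≠ 1 by omega, show i ≠ 0 by omega]

/-- If `s` has a non-slippery step at `1`, then
`dirreach(s^{↓2}) = dirreach(s)^{↓2}`. -/
theorem stmt8 (s : ℕ → ℕ) (hs : IsPartition s) (h : NonSlipperyStep1 s) :
    dirreach (incr s 1) = (fun u => incr u 1) '' dirreach s := by
  obtain ⟨h01, m, hm1, hplat, hcl⟩ := h
  have hs1 : 2 ≤ s 1 := by omega
  ext t'
  simp only [dirreach, Set.mem_setOf_eq, Set.mem_image]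
  constructor
  · rintro ⟨i, hstep⟩
    rcases hstep with ⟨hc, rfl⟩ | ⟨m', hsl, rfl⟩
    · -- cliff in incr s 1 at i
      match i with
      | 0 =>
        exfalso
        unfold Cliff at hc
        norm_num [incr_one_apply] at hc
        omega
      | 1 =>
        have hc' : s 2 + 2 ≤ s 1 + 1 := by
          unfold Cliff at hc
          norm_num [incr_one_apply] at hc
          omega
        have hm2 : m = 1 := by
          by_contra hne
          have := hplat 2 (by omega) (by omega)
          omega
        have hcs : Cliff s 1 := by
          unfold Cliff
          rw [hm2] at hcl
          omega
        refine ⟨moveGrain s 1 2, ⟨1, Or.inl ⟨hcs, rfl⟩⟩, ?_⟩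
        exact incr_moveGrain_comm' s (by omega)
      | (n + 2) =>
        have hcs : Cliff s (n + 2) := (cliff_incr_iff (by omega)).mp hc
        refine ⟨moveGrain s (n + 2) (n + 3), ⟨n + 2, Or.inl ⟨hcs, rfl⟩⟩, ?_⟩
        exact incr_moveGrain_comm s (by omega) (by omega)
    · -- slip in incr s 1 at i, plateau to m'
      match i with
      | 0 =>
        exfalso
        obtain ⟨h1, h2, h3⟩ := hsl
        have h21 := h2 1 (by omega) h1
        norm_num [incr_one_apply] at h21
        omega
      | 1 =>
        exfalso
        obtain ⟨h1, h2, h3⟩ := hsl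
        norm_num [incr_one_apply, show m' + 1 ≠ 1 by omega, show m' ≠ 0 by omega] at h3
        rcases lt_trichotomy m' m with hlt | rfl | hgt
        · have hp := hplat (m' + 1) (by omega) (by omega)
          omega
        · omega
        · have h2m := h2 (m + 1) (by omega) (by omega)
          norm_num [incr_one_apply, show m + 1 ≠ 1 by omega, show m ≠ 0 by omega] at h2m
          omega
      | (n + 2) =>
        have hss : SlipAt s (n + 2) m' := (slipAt_incr_iff (by omega)).mp hsl
        have hm' : m' + 1 ≠ 1 := by obtain ⟨h1, -, -⟩ := hss; omega
        refine ⟨moveGrain s (n + 2) (m' + 1), ⟨n + 2, Or.inr ⟨m', hss, rfl⟩⟩, ?_⟩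
        exact incr_moveGrain_comm s (by omega) hm'
  · rintro ⟨t, ⟨i, hstep⟩, rfl⟩
    rcases hstep with ⟨hc, rfl⟩ | ⟨m', hsl, rfl⟩
    · -- cliff in s at i
      match i with
      | 0 => exfalso; unfold Cliff at hc; norm_num at hc; omega
      | 1 =>
        have hc' : Cliff (incr s 1) 1 := by
          unfold Cliff at hc ⊢
          norm_num [incr_one_apply] at hc ⊢
          omega
        refine ⟨1, Or.inl ⟨hc', ?_⟩⟩
        exact incr_moveGrain_comm' s (by omega)
      | (n + 2) =>
        refine ⟨n + 2, Or.inl ⟨(cliff_incr_iff (by omega)).mpr hc, ?_⟩⟩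
        exact incr_moveGrain_comm s (by omega) (by omega)
    · -- slip in s at i
      match i with
      | 0 =>
        exfalso
        obtain ⟨h1, h2, h3⟩ := hsl
        rcases lt_trichotomy m' m with hlt | rfl | hgt
        · have hp := hplat (m' + 1) (by omega) (by omega)
          omega
        · omega
        · have := h2 (m + 1) (by omega) (by omega)
          omega
      | 1 =>
        exfalso
        obtain ⟨h1, h2, h3⟩ := hsl
        rcases lt_trichotomy m' m with hlt | rfl | hgt
        · have hp := hplat (m' + 1) (by omega) (by omega)
          omega
        · have h22 := h2 2 (by omega) (by omega)
          have hp2 := hplat 2 (by omega) (by omega)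
          omega
        · have := h2 (m + 1) (by omega) (by omega)
          have hpm := hplat m (by omega) (by omega)
          omega
      | (n + 2) =>
        have hm' : m' + 1 ≠ 1 := by obtain ⟨h1, -, -⟩ := hsl; omega
        refine ⟨n + 2, Or.inr ⟨m', (slipAt_incr_iff (by omega)).mpr hsl, ?_⟩⟩
        exact incr_moveGrain_comm s (by omega) hm'
end

section
/- Let s be a partition having a slippery plateau of length l at 1 (l ≥ 2) and a non-slippery step at l, i.e., there is m ≥ l+1 with s_l − 1 = s_{l+1} = ⋯ = s_m ≥ s_{m+1}+2. Then dirreach(s^{↓(l+1)}) = dirreach(s)^{↓(l+1)}. -/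
/-- If `s` has a slippery plateau of length `l ≥ 2` at `1`
and a non-slippery step at `l` (there is `m ≥ l+1` with
`s_l − 1 = s_{l+1} = ⋯ = s_m ≥ s_{m+1} + 2`, stated here in 0-based indices),
then `dirreach(s^{↓(l+1)}) = dirreach(s)^{↓(l+1)}`. -/
theorem stmt10 (s : ℕ → ℕ) (l : ℕ) (hs : IsPartition s) (hl : 2 ≤ l)
    (hp : SlipperyPlateau1 s l)
    (hns : ∃ m, l ≤ m ∧ (∀ j, l ≤ j → j ≤ m → s j + 1 = s (l - 1)) ∧
      s (m + 1) + 2 ≤ s m) :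
    dirreach (incr s l) = (fun v => incr v l) '' dirreach s := by
  obtain ⟨hplat, hsl⟩ := hp
  obtain ⟨m, hlm, hmid0, hcl⟩ := hns
  have hl1 : s (l - 1) = s 0 := hplat _ (by omega)
  have hmid : ∀ j, l ≤ j → j ≤ m → s j + 1 = s 0 := fun j h1 h2 => by
    rw [← hl1]; exact hmid0 j h1 h2
  have hsm : s m + 1 = s 0 := hmid m hlm le_rfl
  have htail : s (m + 1) + 3 ≤ s 0 := by omega
  set t := incr s l with htdef
  have ht : ∀ j, t j = if j = l then s 0 else s j := by
    intro j
    simp only [htdef, incr, Function.update_apply]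
    split <;> omega
  have hvS : ∀ j, j ≤ m → s 0 ≤ s j + 1 ∧ s j ≤ s 0 := by
    intro j hj
    by_cases h : j < l
    · rw [hplat j h]; omega
    · have := hmid j (by omega) hj; omega
  have hvT : ∀ j, j ≤ m → s 0 ≤ t j + 1 ∧ t j ≤ s 0 := by
    intro j hj
    have h1 := ht j
    have h2 := hvS j hj
    by_cases h : j = l
    · rw [if_pos h] at h1; omega
    · rw [if_neg h] at h1; omega
  have htm1 : t (m + 1) = s (m + 1) := by
    rw [ht]; exact if_neg (by omega)
  have htmv := hvT m le_rfl
  have hIncr : ∀ (w : ℕ → ℕ) (j : ℕ), incr w l j = if j = l then w l + 1 else w j := by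
    intro w j; simp [incr, Function.update_apply]
  have htl : t l = s l + 1 := by
    rw [ht, if_pos rfl]; omega
  have htne : ∀ k, k ≠ l → t k = s k := by
    intro k hk; rw [ht, if_neg hk]
  have hcomm : ∀ p q, l ≤ p → p < q → 1 ≤ s p →
      moveGrain t p q = incr (moveGrain s p q) l := by
    intro p q hlp hpq hsp
    funext j
    rw [hIncr]
    by_cases hjl : j = l
    · subst hjl
      rw [if_pos rfl]
      simp only [moveGrain]
      split_ifs with h1 h2
      · have e : t p = s p + 1 := by rw [← h1]; exact htl
        omega
      · exact absurd h2 (by omega)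
      · exact htl
    · rw [if_neg hjl]
      simp only [moveGrain]
      split_ifs with h1 h2
      · rw [htne p (by omega)]
      · rw [htne q (by omega)]
      · rw [htne j hjl]
  have noStepS : ∀ i v, i < m → ¬ Step s i v := by
    intro i v him hstep
    have h' : (Cliff s i ∧ v = moveGrain s i (i + 1)) ∨
        ∃ m', SlipAt s i m' ∧ v = moveGrain s i (m' + 1) := hstep
    rcases h' with ⟨hc, -⟩ | ⟨m', hsa, -⟩
    · have hc' : s (i + 1) + 2 ≤ s i := hc
      have h1 := hvS i (by omega)
      have h2 := hvS (i + 1) (by omega)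
      omega
    · have hsa' : i + 1 ≤ m' ∧ (∀ j, i + 1 ≤ j → j ≤ m' → s j + 1 = s i) ∧
          s (m' + 1) + 2 = s i := hsa
      obtain ⟨hm1, hj, hm2⟩ := hsa'
      rcases le_or_gt m m' with h | h
      · have e1 : s m + 1 = s i := hj m (by omega) h
        rcases h.eq_or_lt with rfl | h2
        · omega
        · have e2 : s (m + 1) + 1 = s i := hj (m + 1) (by omega) h2
          omega
      · have h1 := hvS i (by omega)
        have h2 := hvS (m' + 1) (by omega)
        omega
  have noStepT : ∀ i u, i < m → ¬ Step t i u := by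
    intro i u him hstep
    have h' : (Cliff t i ∧ u = moveGrain t i (i + 1)) ∨
        ∃ m', SlipAt t i m' ∧ u = moveGrain t i (m' + 1) := hstep
    rcases h' with ⟨hc, -⟩ | ⟨m', hsa, -⟩
    · have hc' : t (i + 1) + 2 ≤ t i := hc
      have h1 := hvT i (by omega)
      have h2 := hvT (i + 1) (by omega)
      omega
    · have hsa' : i + 1 ≤ m' ∧ (∀ j, i + 1 ≤ j → j ≤ m' → t j + 1 = t i) ∧
          t (m' + 1) + 2 = t i := hsa
      obtain ⟨hm1, hj, hm2⟩ := hsa'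
      rcases le_or_gt m m' with h | h
      · have e1 : t m + 1 = t i := hj m (by omega) h
        have h1 := hvT i (by omega)
        rcases h.eq_or_lt with rfl | h2
        · omega
        · have e2 : t (m + 1) + 1 = t i := hj (m + 1) (by omega) h2
          omega
      · have h1 := hvT i (by omega)
        have h2 := hvT (m' + 1) (by omega)
        omega
  have hsm2 : 2 ≤ s m := by omega
  have stepSm : ∀ v, Step s m v ↔ v = moveGrain s m (m + 1) := by
    intro v
    constructor
    · intro hstep
      have h' : (Cliff s m ∧ v = moveGrain s m (m + 1)) ∨
          ∃ m', SlipAt s m m' ∧ v = moveGrain s m (m' + 1) := hstep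
      rcases h' with ⟨-, hv⟩ | ⟨m', hsa, -⟩
      · exact hv
      · have hsa' : m + 1 ≤ m' ∧ (∀ j, m + 1 ≤ j → j ≤ m' → s j + 1 = s m) ∧
            s (m' + 1) + 2 = s m := hsa
        exact absurd (hsa'.2.1 (m + 1) le_rfl hsa'.1) (by omega)
    · rintro rfl
      exact Or.inl ⟨hcl, rfl⟩
  have hct : Cliff t m := by
    show t (m + 1) + 2 ≤ t m
    omega
  have stepTm : ∀ u, Step t m u ↔ u = moveGrain t m (m + 1) := by
    intro u
    constructor
    · intro hstep
      have h' : (Cliff t m ∧ u = moveGrain t m (m + 1)) ∨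
          ∃ m', SlipAt t m m' ∧ u = moveGrain t m (m' + 1) := hstep
      rcases h' with ⟨-, hu⟩ | ⟨m', hsa, -⟩
      · exact hu
      · have hsa' : m + 1 ≤ m' ∧ (∀ j, m + 1 ≤ j → j ≤ m' → t j + 1 = t m) ∧
            t (m' + 1) + 2 = t m := hsa
        exact absurd (hsa'.2.1 (m + 1) le_rfl hsa'.1) (by omega)
    · rintro rfl
      exact Or.inl ⟨hct, rfl⟩
  have key : ∀ i u, Step t i u ↔ ∃ v, Step s i v ∧ u = incr v l := by
    intro i u
    rcases lt_trichotomy i m with him | rfl | him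
    · constructor
      · intro h; exact absurd h (noStepT i u him)
      · rintro ⟨v, hv, -⟩; exact absurd hv (noStepS i v him)
    · rw [stepTm]
      constructor
      · rintro rfl
        exact ⟨moveGrain s i (i + 1), (stepSm _).mpr rfl,
          hcomm i (i + 1) hlm (by omega) (by omega)⟩
      · rintro ⟨v, hv, rfl⟩
        rw [(stepSm v).mp hv]
        exact (hcomm i (i + 1) hlm (by omega) (by omega)).symm
    · have heq : ∀ j, m + 1 ≤ j → t j = s j := fun j hj => htne j (by omega)
      constructor
      · intro hstep
        have h' : (Cliff t i ∧ u = moveGrain t i (i + 1)) ∨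
            ∃ m', SlipAt t i m' ∧ u = moveGrain t i (m' + 1) := hstep
        rcases h' with ⟨hc, rfl⟩ | ⟨m', hsa, rfl⟩
        · have hc' : t (i + 1) + 2 ≤ t i := hc
          rw [heq i (by omega), heq (i + 1) (by omega)] at hc'
          exact ⟨moveGrain s i (i + 1), Or.inl ⟨hc', rfl⟩,
            hcomm i (i + 1) (by omega) (by omega) (by omega)⟩
        · have hsa' : i + 1 ≤ m' ∧ (∀ j, i + 1 ≤ j → j ≤ m' → t j + 1 = t i) ∧
              t (m' + 1) + 2 = t i := hsa
          obtain ⟨hm1, hj, hm2⟩ := hsa'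
          rw [heq (m' + 1) (by omega), heq i (by omega)] at hm2
          have hslipS : SlipAt s i m' := by
            show i + 1 ≤ m' ∧ (∀ j, i + 1 ≤ j → j ≤ m' → s j + 1 = s i) ∧
              s (m' + 1) + 2 = s i
            refine ⟨hm1, fun j h1 h2 => ?_, hm2⟩
            have := hj j h1 h2
            rw [heq j (by omega), heq i (by omega)] at this
            exact this
          exact ⟨moveGrain s i (m' + 1), Or.inr ⟨m', hslipS, rfl⟩,
            hcomm i (m' + 1) (by omega) (by omega) (by omega)⟩
      · rintro ⟨v, hv, rfl⟩
        have h' : (Cliff s i ∧ v = moveGrain s i (i + 1)) ∨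
            ∃ m', SlipAt s i m' ∧ v = moveGrain s i (m' + 1) := hv
        rcases h' with ⟨hc, rfl⟩ | ⟨m', hsa, rfl⟩
        · have hc' : s (i + 1) + 2 ≤ s i := hc
          have hct' : Cliff t i := by
            show t (i + 1) + 2 ≤ t i
            rw [heq i (by omega), heq (i + 1) (by omega)]
            exact hc'
          rw [← hcomm i (i + 1) (by omega) (by omega) (by omega)]
          exact Or.inl ⟨hct', rfl⟩
        · have hsa' : i + 1 ≤ m' ∧ (∀ j, i + 1 ≤ j → j ≤ m' → s j + 1 = s i) ∧
              s (m' + 1) + 2 = s i := hsa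
          obtain ⟨hm1, hj, hm2⟩ := hsa'
          have hslipT : SlipAt t i m' := by
            show i + 1 ≤ m' ∧ (∀ j, i + 1 ≤ j → j ≤ m' → t j + 1 = t i) ∧
              t (m' + 1) + 2 = t i
            refine ⟨hm1, fun j h1 h2 => ?_, ?_⟩
            · rw [heq j (by omega), heq i (by omega)]
              exact hj j h1 h2
            · rw [heq (m' + 1) (by omega), heq i (by omega)]
              exact hm2
          rw [← hcomm i (m' + 1) (by omega) (by omega) (by omega)]
          exact Or.inr ⟨m', hslipT, rfl⟩
  ext u
  simp only [dirreach, Set.mem_setOf_eq, Set.mem_image]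
  constructor
  · rintro ⟨i, hstep⟩
    obtain ⟨v, hv, rfl⟩ := (key i u).mp hstep
    exact ⟨v, ⟨i, hv⟩, rfl⟩
  · rintro ⟨v, ⟨i, hv⟩, rfl⟩
    exact ⟨i, (key i _).mpr ⟨v, hv, rfl⟩⟩
end
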